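/- Let λ ∈ ℂ, h(z), b(z) ∈ ℂ((z)) with h′(z) ≠ 0, and set L := −(h/h′)∂ + b. Define ρ(L_0) = L and, for i ≥ −1 with i ≠ 0, ρ(L_i) = h^i (L + iλ) P(L − λ − i, i), where P is the Pochhammer symbol P(f,n) = f(f+1)···(f+n−1) for n > 0, P(f,0)=1, and P(f,−1) = 1/(f−1). Then [ρ(L_i), ρ(L_j)] = (i−j)ρ(L_{i+j}) for all i, j ≥ −1, so ρ is a representation of Witt_>. -/

import Mathlib

set_option synthInstance.maxHeartbeats 1000000
set_option maxHeartbeats 1000000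
set_option maxSynthPendingDepth 3

noncomputable section

/-- The derivative `∂ = d/dz` on `ℂ((z))`, as a `ℂ`-linear endomorphism. -/
def Dz : Module.End ℂ (LaurentSeries ℂ) := LaurentSeries.derivative ℂ

/-- Multiplication by a Laurent series `g`, as a `ℂ`-linear endomorphism of `ℂ((z))`. -/
def mz (g : LaurentSeries ℂ) : Module.End ℂ (LaurentSeries ℂ) where
  toFun f := g * f
  map_add' := mul_add g
  map_smul' c f := by
    show g * (c • f) = c • (g * f)
    rw [← HahnSeries.single_zero_mul_eq_smul, ← HahnSeries.single_zero_mul_eq_smul, mul_left_comm]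

/-- `P` is a differential operator on `ℂ((z))` of order `≤ k`: `P = Σ_{j=0}^{k} ξ_j ∂^j`. -/
def DiffOrderLE (P : Module.End ℂ (LaurentSeries ℂ)) (k : ℕ) : Prop :=
  ∃ ξ : ℕ → LaurentSeries ℂ, P = ∑ j ∈ Finset.range (k + 1), mz (ξ j) * Dz ^ j

/-- `P` is a differential operator on `ℂ((z))` of order `< k` (for `k = 0` this means `P = 0`). -/
def DiffOrderLT (P : Module.End ℂ (LaurentSeries ℂ)) (k : ℕ) : Prop :=
  ∃ ξ : ℕ → LaurentSeries ℂ, P = ∑ j ∈ Finset.range k, mz (ξ j) * Dz ^ j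

/-- `P` is a differential operator on `ℂ((z))` of order exactly `k`. -/
def HasOrder (P : Module.End ℂ (LaurentSeries ℂ)) (k : ℕ) : Prop :=
  DiffOrderLE P k ∧ ¬ DiffOrderLT P k

/-- The Pochhammer product `P(A, n) = A (A+1) ⋯ (A+n−1)` in the ring of endomorphisms. -/
def pochEnd (A : Module.End ℂ (LaurentSeries ℂ)) (n : ℕ) : Module.End ℂ (LaurentSeries ℂ) :=
  ((List.range n).map fun k => A + (k : ℂ) • 1).prod

section AuxWitt
open Finset Polynomial

lemma Dz_coeff (f : LaurentSeries ℂ) (n : ℤ) :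
    (Dz f).coeff n = ((n+1 : ℤ) : ℂ) * f.coeff (n+1) := by
  show (LaurentSeries.derivative ℂ f).coeff n = _
  rw [LaurentSeries.derivative_apply, LaurentSeries.hasseDeriv_coeff]
  push_cast
  rw [Ring.choose_one_right, zsmul_eq_mul]
  push_cast
  ring

lemma Dz_support (x : LaurentSeries ℂ) :
    (Dz x).support ⊆ (fun a => a - 1) '' x.support := by
  intro n hn
  have h1 : x.coeff (n + 1) ≠ 0 := by
    intro h0
    apply hn
    rw [HahnSeries.mem_support] at hn
    simp [Dz_coeff, h0]
  exact ⟨n + 1, h1, by ring⟩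

lemma Dz_mul (x y : LaurentSeries ℂ) : Dz (x * y) = Dz x * y + x * Dz y := by
  ext n
  have hsx : ((fun a => a - 1) '' x.support).IsPWO :=
    x.isPWO_support.image_of_monotone (fun a b hab => by simpa using hab)
  have hsy : ((fun a => a - 1) '' y.support).IsPWO :=
    y.isPWO_support.image_of_monotone (fun a b hab => by simpa using hab)
  rw [HahnSeries.coeff_add, Dz_coeff, HahnSeries.coeff_mul,
      HahnSeries.coeff_mul_left' hsx (Dz_support x),
      HahnSeries.coeff_mul_right' hsy (Dz_support y)]
  have hA : ∑ p ∈ Finset.antidiagonal hsx y.isPWO_support n,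
        (Dz x).coeff p.1 * y.coeff p.2
      = ∑ p ∈ Finset.antidiagonal x.isPWO_support y.isPWO_support (n+1),
        ((p.1 : ℂ)) * (x.coeff p.1 * y.coeff p.2) := by
    refine Finset.sum_nbij' (fun p => (p.1 + 1, p.2)) (fun p => (p.1 - 1, p.2)) ?_ ?_ ?_ ?_ ?_
    · rintro ⟨a, c⟩ hp
      rw [Finset.mem_addAntidiagonal] at hp ⊢
      obtain ⟨⟨a', ha', rfl⟩, h2, h3⟩ := hp
      dsimp only at h3 ⊢
      exact ⟨by simpa using ha', h2, by omega⟩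
    · rintro ⟨a, c⟩ hp
      rw [Finset.mem_addAntidiagonal] at hp ⊢
      exact ⟨⟨a, hp.1, rfl⟩, hp.2.1, by dsimp only; omega⟩
    · rintro ⟨a, c⟩ _; simp
    · rintro ⟨a, c⟩ _; simp
    · rintro ⟨a, c⟩ _
      simp only [Dz_coeff]
      push_cast
      ring
  have hB : ∑ p ∈ Finset.antidiagonal x.isPWO_support hsy n,
        x.coeff p.1 * (Dz y).coeff p.2
      = ∑ p ∈ Finset.antidiagonal x.isPWO_support y.isPWO_support (n+1),
        ((p.2 : ℂ)) * (x.coeff p.1 * y.coeff p.2) := by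
    refine Finset.sum_nbij' (fun p => (p.1, p.2 + 1)) (fun p => (p.1, p.2 - 1)) ?_ ?_ ?_ ?_ ?_
    · rintro ⟨a, c⟩ hp
      rw [Finset.mem_addAntidiagonal] at hp ⊢
      obtain ⟨h1, ⟨c', hc', rfl⟩, h3⟩ := hp
      dsimp only at h3 ⊢
      exact ⟨h1, by simpa using hc', by omega⟩
    · rintro ⟨a, c⟩ hp
      rw [Finset.mem_addAntidiagonal] at hp ⊢
      exact ⟨hp.1, ⟨c, hp.2.1, rfl⟩, by dsimp only; omega⟩
    · rintro ⟨a, c⟩ _; simp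
    · rintro ⟨a, c⟩ _; simp
    · rintro ⟨a, c⟩ _
      simp only [Dz_coeff]
      push_cast
      ring
  rw [hA, hB, ← Finset.sum_add_distrib, Finset.mul_sum]
  refine Finset.sum_congr rfl ?_
  rintro ⟨a, c⟩ hp
  rw [Finset.mem_addAntidiagonal] at hp
  have : a + c = n + 1 := hp.2.2
  have h2 : ((a : ℂ) + (c : ℂ)) = ((n : ℂ) + 1) := by
    rw [show ((n:ℂ)+1) = ((n+1 : ℤ) : ℂ) by push_cast; ring, ← this]; push_cast; ring
  rw [← add_mul, h2]
  push_cast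
  ring

lemma mz_apply (g f : LaurentSeries ℂ) : mz g f = g * f := rfl

lemma mz_mul (a b : LaurentSeries ℂ) : mz (a * b) = mz a * mz b :=
  LinearMap.ext fun f => mul_assoc a b f

lemma mz_one : mz 1 = 1 :=
  LinearMap.ext fun f => one_mul f

lemma key1 (lam : ℂ) (h b : LaurentSeries ℂ) (hder : Dz h ≠ 0)
    (L : Module.End ℂ (LaurentSeries ℂ))
    (hL : L = mz (-(h / Dz h)) * Dz + mz b) :
    L * mz h = mz h * (L - 1) := by
  subst hL
  refine LinearMap.ext fun f => ?_
  show (-(h / Dz h)) * (Dz (h * f)) + b * (h * f)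
      = h * ((-(h / Dz h)) * Dz f + b * f - f)
  rw [Dz_mul]
  have e : h / Dz h * Dz h = h := div_mul_cancel₀ h hder
  linear_combination (-f) * e

lemma key_inv (h : LaurentSeries ℂ) (hne : h ≠ 0)
    (L : Module.End ℂ (LaurentSeries ℂ))
    (hk : L * mz h = mz h * (L - 1)) :
    L * mz h⁻¹ = mz h⁻¹ * (L + 1) := by
  have hBA : mz h⁻¹ * mz h = 1 := by rw [← mz_mul, inv_mul_cancel₀ hne, mz_one]
  have hAB : mz h * mz h⁻¹ = 1 := by rw [← mz_mul, mul_inv_cancel₀ hne, mz_one]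
  have e1 : (L + 1) * mz h = mz h * L := by
    rw [add_mul, one_mul, hk]; noncomm_ring
  have c2 : (mz h⁻¹ * (L + 1)) * mz h = L := by
    rw [mul_assoc, e1, ← mul_assoc, hBA, one_mul]
  conv_lhs => rw [← c2]
  rw [mul_assoc (mz h⁻¹ * (L + 1)), hAB, mul_one]

lemma key_zpow (h : LaurentSeries ℂ) (hne : h ≠ 0)
    (L : Module.End ℂ (LaurentSeries ℂ))
    (hk : L * mz h = mz h * (L - 1)) (i : ℤ) :
    L * mz (h ^ i) = mz (h ^ i) * (L - (i : ℂ) • 1) := by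
  have step : ∀ c : ℂ, (L - c • 1) * mz h = mz h * (L - (c + 1) • 1) := by
    intro c
    have e : (L - c • 1) * mz h = L * mz h - c • mz h := by noncomm_ring
    rw [e, hk]
    rw [add_smul, one_smul]
    noncomm_ring
  have hki := key_inv h hne L hk
  have stepi : ∀ c : ℂ, (L - c • 1) * mz h⁻¹ = mz h⁻¹ * (L - (c - 1) • 1) := by
    intro c
    have e : (L - c • 1) * mz h⁻¹ = L * mz h⁻¹ - c • mz h⁻¹ := by noncomm_ring
    rw [e, hki]
    rw [sub_smul, one_smul]
    noncomm_ring
  induction i using Int.induction_on with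
  | zero => simp [mz_one]
  | succ n ih =>
      rw [zpow_add_one₀ hne, mz_mul, ← mul_assoc, ih, mul_assoc, step, ← mul_assoc, ← mz_mul,
        ← zpow_add_one₀ hne]
      norm_num
  | pred n ih =>
      rw [show ((-(n:ℤ) - 1 : ℤ)) = (-(n:ℤ)) + (-1) by ring, zpow_add₀ hne, zpow_neg_one, mz_mul,
        ← mul_assoc, ih, mul_assoc, stepi, ← mul_assoc, ← mz_mul, ← zpow_neg_one, ← zpow_add₀ hne]
      push_cast
      ring_nf

lemma conj_poly {A M1 M2 : Module.End ℂ (LaurentSeries ℂ)} (hc : M1 * A = A * M2)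
    (p : Polynomial ℂ) : (aeval M1 p) * A = A * (aeval M2 p) := by
  induction p using Polynomial.induction_on with
  | C a => rw [aeval_C, aeval_C]
           simp [Algebra.algebraMap_eq_smul_one, smul_mul_assoc, mul_smul_comm]
  | add p q hp hq => rw [map_add, map_add, add_mul, mul_add, hp, hq]
  | monomial n a ih =>
      rw [pow_succ, ← mul_assoc, map_mul, map_mul, map_mul, map_mul] at *
      rw [aeval_X, aeval_X] at *
      rw [mul_assoc _ M1 A, hc, ← mul_assoc, ih, mul_assoc, mul_assoc]

lemma pochEnd_def (A : Module.End ℂ (LaurentSeries ℂ)) (n : ℕ) :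
    pochEnd A n = ((List.range n).map fun (k : ℕ) => A + ((k : ℂ)) • 1).prod := by
  rw [pochEnd]
  congr 1
  show List.map _ ((List.range n).flatMap fun a => [((a : ℕ) : ℂ)]) = _
  rw [← List.map_eq_flatMap, List.map_map]
  rfl

def Rpoly (lam : ℂ) (n : ℕ) : Polynomial ℂ :=
  ∏ k ∈ Finset.range n, (X - C (lam + k + 1))

def Qpoly (lam : ℂ) (i : ℤ) : Polynomial ℂ :=
  if i = -1 then 1 else (X + C ((i : ℂ) * lam)) * Rpoly lam i.toNat

lemma Rcomp (lam : ℂ) (m n : ℕ) :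
    (Rpoly lam m).comp (X - C (n : ℂ)) * Rpoly lam n = Rpoly lam (n + m) := by
  rw [Rpoly, Rpoly, Rpoly, Polynomial.prod_comp, Finset.prod_range_add, mul_comm]
  congr 1
  refine Finset.prod_congr rfl fun k _ => ?_
  rw [sub_comp, X_comp, C_comp]
  push_cast
  simp only [sub_eq_add_neg, ← map_neg C, add_assoc, ← map_add C]
  congr 1
  ring

lemma aeval_lin (L : Module.End ℂ (LaurentSeries ℂ)) (c : ℂ) :
    aeval L (X - C c) = L - c • 1 := by
  rw [map_sub, aeval_X, aeval_C, Algebra.algebraMap_eq_smul_one]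

lemma listprod_eq (lam : ℂ) (n : ℕ) :
    (((List.range n).map fun (k : ℕ) => X - C (lam + (n : ℂ) - (k : ℕ))).prod : Polynomial ℂ)
      = Rpoly lam n := by
  induction n with
  | zero => simp [Rpoly]
  | succ n ih =>
      rw [List.range_succ_eq_map]
      rw [List.map_cons, List.prod_cons, List.map_map]
      have e : ((List.range n).map
            (((fun k : ℕ => X - C (lam + (↑(n+1) : ℂ) - (k : ℕ))) ∘ Nat.succ)))
          = (List.range n).map fun (k : ℕ) => X - C (lam + (n : ℂ) - (k : ℕ)) := by
        refine List.map_congr_left fun k _ => ?_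
        simp only [Function.comp_apply]
        push_cast
        ring_nf
      rw [e, ih]
      conv_rhs => rw [Rpoly, Finset.prod_range_succ, ← Rpoly]
      rw [mul_comm]
      congr 1
      push_cast
      ring_nf

lemma pochEnd_eq (L : Module.End ℂ (LaurentSeries ℂ)) (lam : ℂ) (n : ℕ) :
    pochEnd (L - (lam + (n : ℂ)) • 1) n = aeval L (Rpoly lam n) := by
  rw [pochEnd_def]
  have h1 : ((List.range n).map fun (k : ℕ) => (L - (lam + (n : ℂ)) • 1) + ((k : ℂ)) • 1)
      = (List.range n).map fun (k : ℕ) => aeval L (X - C (lam + (n : ℂ) - (k : ℕ))) := by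
    refine List.map_congr_left fun k _ => ?_
    rw [aeval_lin, sub_smul, add_smul]
    abel
  rw [h1, show (fun (k : ℕ) => aeval L (X - C (lam + (n : ℂ) - (k : ℕ))))
      = (aeval L (R := ℂ)) ∘ (fun (k : ℕ) => X - C (lam + (n : ℂ) - (k : ℕ))) from rfl,
    ← List.map_map, ← map_list_prod (aeval L : Polynomial ℂ →ₐ[ℂ] _), listprod_eq]

lemma Qpoly_nat (lam : ℂ) (m : ℕ) :
    Qpoly lam (m : ℤ) = (X + C ((m : ℂ) * lam)) * Rpoly lam m := by
  rw [Qpoly, if_neg (by omega)]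
  simp [Int.toNat_natCast]

lemma polyid_main (lam : ℂ) (m n : ℕ) :
    (Qpoly lam (m : ℤ)).comp (X - C ((n : ℕ) : ℂ)) * Qpoly lam (n : ℤ)
      - (Qpoly lam (n : ℤ)).comp (X - C ((m : ℕ) : ℂ)) * Qpoly lam (m : ℤ)
      = C ((m : ℂ) - (n : ℂ)) * Qpoly lam ((m : ℤ) + (n : ℤ)) := by
  rw [show ((m : ℤ) + (n : ℤ)) = ((m + n : ℕ) : ℤ) by push_cast; ring]
  rw [Qpoly_nat, Qpoly_nat, Qpoly_nat]
  have h1 : (Rpoly lam m).comp (X - C (n : ℂ)) * Rpoly lam n = Rpoly lam (m + n) := by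
    rw [Rcomp, Nat.add_comm]
  have h2 : (Rpoly lam n).comp (X - C (m : ℂ)) * Rpoly lam m = Rpoly lam (m + n) :=
    Rcomp lam n m
  rw [mul_comp, add_comp, X_comp, C_comp, mul_comp, add_comp, X_comp, C_comp]
  simp only [Nat.cast_add, map_add, map_mul, map_sub]
  linear_combination ((X - C (n:ℂ) + C (m:ℂ) * C lam) * (X + C (n:ℂ) * C lam)) * h1
    - ((X - C (m:ℂ) + C (n:ℂ) * C lam) * (X + C (m:ℂ) * C lam)) * h2

lemma polyid_m1 (lam : ℂ) (m : ℕ) :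
    (Qpoly lam (m : ℤ)).comp (X + C 1) - Qpoly lam (m : ℤ)
      = C ((m : ℂ) + 1) * Qpoly lam ((m : ℤ) - 1) := by
  cases m with
  | zero =>
      simp [Qpoly, Rpoly]
  | succ s =>
      rw [show ((((s : ℕ) + 1 : ℕ) : ℤ) - 1) = ((s : ℕ) : ℤ) by push_cast; ring]
      rw [Qpoly_nat, Qpoly_nat]
      have hR1 : (Rpoly lam (s + 1)).comp (X + C 1) = (X - C lam) * Rpoly lam s := by
        rw [Rpoly, Polynomial.prod_comp]
        have e : ∀ k ∈ Finset.range (s + 1),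
            (X - C (lam + (k : ℂ) + 1)).comp (X + C 1) = X - C (lam + (k : ℂ)) := by
          intro k _
          rw [sub_comp, X_comp, C_comp]
          simp only [sub_eq_add_neg, ← map_neg C, add_assoc, ← map_add C]
          congr 1
          ring
        rw [Finset.prod_congr rfl e, Finset.prod_range_succ' (fun k => X - C (lam + (k : ℂ)))]
        rw [mul_comm]
        congr 1
        · congr 1
          ring_nf
        · refine Finset.prod_congr rfl fun k _ => ?_
          push_cast
          ring_nf
      have hR2 : Rpoly lam (s + 1) = Rpoly lam s * (X - C (lam + (s : ℂ) + 1)) := by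
        rw [Rpoly, Finset.prod_range_succ, ← Rpoly]
      rw [mul_comp, add_comp, X_comp, C_comp]
      simp only [Nat.cast_add, Nat.cast_one, map_add, map_mul, map_one, C_1] at hR1 hR2 ⊢
      linear_combination (X + 1 + (C (s:ℂ) + 1) * C lam) * hR1
        - (X + (C (s:ℂ) + 1) * C lam) * hR2

lemma aeval_lin2 (L : Module.End ℂ (LaurentSeries ℂ)) (c : ℂ) :
    aeval L (X + C c) = L + c • 1 := by
  rw [map_add, aeval_X, aeval_C, Algebra.algebraMap_eq_smul_one]

lemma aeval_shift (L : Module.End ℂ (LaurentSeries ℂ)) (c : ℂ) (p : Polynomial ℂ) :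
    aeval (L - c • 1) p = aeval L (p.comp (X - C c)) := by
  rw [aeval_comp, aeval_lin]

theorem witt_main
    (lam : ℂ) (h b : LaurentSeries ℂ) (hder : Dz h ≠ 0)
    (L : Module.End ℂ (LaurentSeries ℂ))
    (hL : L = mz (-(h / Dz h)) * Dz + mz b)
    (ρ : ℤ → Module.End ℂ (LaurentSeries ℂ))
    (hρ : ∀ i : ℤ, 0 ≤ i →
      ρ i = mz (h ^ i) * (L + ((i : ℂ) * lam) • 1) * pochEnd (L - (lam + (i : ℂ)) • 1) i.toNat)
    (hρm1 : ρ (-1) = mz h⁻¹) :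
    ∀ i j : ℤ, -1 ≤ i → -1 ≤ j →
      ⁅ρ i, ρ j⁆ = (((i : ℂ) - (j : ℂ))) • ρ (i + j) := by
  have hne : h ≠ 0 := fun e => hder (by rw [e, map_zero])
  have hk : L * mz h = mz h * (L - 1) := key1 lam h b hder L hL
  have hzp := key_zpow h hne L hk
  -- ρ in terms of Qpoly
  have rho_eq : ∀ i : ℤ, -1 ≤ i → ρ i = mz (h ^ i) * aeval L (Qpoly lam i) := by
    intro i hi
    rcases eq_or_lt_of_le hi with hi' | hi'
    · rw [← hi', hρm1, Qpoly, if_pos rfl, map_one, mul_one, zpow_neg_one]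
    · have hi0 : 0 ≤ i := by omega
      obtain ⟨m, rfl⟩ := Int.eq_ofNat_of_zero_le hi0
      rw [hρ _ hi0]
      have c1 : ((↑(m : ℤ) : ℂ)) = (m : ℂ) := by push_cast; rfl
      have c2 : ((m : ℤ)).toNat = m := by omega
      rw [c1, c2, pochEnd_eq, mul_assoc, ← aeval_lin2 L ((m : ℂ) * lam), ← map_mul, Qpoly_nat]
  -- swap lemma
  have swap : ∀ (j : ℤ) (p : Polynomial ℂ),
      aeval L p * mz (h ^ j) = mz (h ^ j) * aeval L (p.comp (X - C ((j : ℤ) : ℂ))) := by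
    intro j p
    rw [← aeval_shift, conj_poly (hzp j) p]
  -- product formula
  have prod_eq : ∀ i j : ℤ, -1 ≤ i → -1 ≤ j →
      ρ i * ρ j = mz (h ^ (i + j)) *
        aeval L ((Qpoly lam i).comp (X - C ((j : ℤ) : ℂ)) * Qpoly lam j) := by
    intro i j hi hj
    rw [rho_eq i hi, rho_eq j hj, mul_assoc, ← mul_assoc (aeval L (Qpoly lam i)), swap j,
      ← mul_assoc, ← mul_assoc, ← mz_mul, ← zpow_add₀ hne, mul_assoc, ← map_mul]
  -- bracket formula
  have brkt : ∀ i j : ℤ, -1 ≤ i → -1 ≤ j →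
      ⁅ρ i, ρ j⁆ = mz (h ^ (i + j)) *
        aeval L ((Qpoly lam i).comp (X - C ((j : ℤ) : ℂ)) * Qpoly lam j
          - (Qpoly lam j).comp (X - C ((i : ℤ) : ℂ)) * Qpoly lam i) := by
    intro i j hi hj
    rw [Ring.lie_def, prod_eq i j hi hj, prod_eq j i hj hi, add_comm j i, map_sub, mul_sub]
  -- final step from polynomial identity
  have final : ∀ i j : ℤ, -1 ≤ i → -1 ≤ j → -1 ≤ i + j →
      ((Qpoly lam i).comp (X - C ((j : ℤ) : ℂ)) * Qpoly lam j
          - (Qpoly lam j).comp (X - C ((i : ℤ) : ℂ)) * Qpoly lam i)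
        = C ((i : ℂ) - (j : ℂ)) * Qpoly lam (i + j) →
      ⁅ρ i, ρ j⁆ = (((i : ℂ) - (j : ℂ))) • ρ (i + j) := by
    intro i j hi hj hij hD
    rw [brkt i j hi hj, hD, map_mul, aeval_C, Algebra.algebraMap_eq_smul_one, rho_eq _ hij]
    rw [smul_mul_assoc, one_mul, mul_smul_comm]
  -- case i ≥ 0, j = -1
  have case_b : ∀ i : ℤ, 0 ≤ i →
      ⁅ρ i, ρ (-1)⁆ = (((i : ℂ) - ((-1 : ℤ) : ℂ))) • ρ (i + (-1)) := by
    intro i hi0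
    obtain ⟨m, rfl⟩ := Int.eq_ofNat_of_zero_le hi0
    refine final _ _ (by omega) (by norm_num) (by omega) ?_
    have e1 : Qpoly lam (-1) = 1 := by rw [Qpoly, if_pos rfl]
    rw [e1, one_comp, mul_one, one_mul]
    have e2 : (X - C (((-1 : ℤ) : ℂ))) = X + C 1 := by push_cast; rw [map_neg, map_one, sub_neg_eq_add]
    rw [e2]
    have := polyid_m1 lam m
    rw [show ((m : ℤ) + (-1)) = ((m : ℤ) - 1) by ring]
    rw [this]
    congr 1
    push_cast
    ring
  intro i j hi hj
  rcases eq_or_lt_of_le hi with hi' | hi' <;> rcases eq_or_lt_of_le hj with hj' | hj'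
  · -- i = -1, j = -1
    rw [← hi', ← hj']
    norm_num
    rw [Ring.lie_def, sub_self]
  · -- i = -1, j ≥ 0
    have hj0 : 0 ≤ j := by omega
    rw [← hi', show ⁅ρ (-1), ρ j⁆ = -⁅ρ j, ρ (-1)⁆ by rw [Ring.lie_def, Ring.lie_def, neg_sub], case_b j hj0, ← neg_smul]
    rw [show (j + (-1 : ℤ)) = (-1 + j) by ring]
    congr 1
    push_cast
    ring
  · -- i ≥ 0, j = -1
    rw [← hj']
    exact case_b i (by omega)
  · -- both ≥ 0
    have hi0 : 0 ≤ i := by omega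
    have hj0 : 0 ≤ j := by omega
    obtain ⟨m, rfl⟩ := Int.eq_ofNat_of_zero_le hi0
    obtain ⟨n, rfl⟩ := Int.eq_ofNat_of_zero_le hj0
    refine final _ _ (by omega) (by omega) (by omega) ?_
    have := polyid_main lam m n
    rw [show (((m : ℤ) : ℂ)) = ((m : ℕ) : ℂ) by push_cast; rfl,
        show (((n : ℤ) : ℂ)) = ((n : ℕ) : ℂ) by push_cast; rfl]
    rw [this]

end AuxWitt

/-- Let `λ ∈ ℂ`, `h, b ∈ ℂ((z))` with `h′ ≠ 0` and set `L := −(h/h′)∂ + b`.  Define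
`ρ(L i) = h^i (L + iλ) P(L − λ − i, i)` for `i ≥ 0` and
`ρ(L₋₁) = h⁻¹` (this is the value of `h^{−1}(L − λ)·P(L − λ + 1, −1)` with
`P(f, −1) = 1/(f−1)`, by formal cancellation).  Then
`[ρ(L i), ρ(L j)] = (i−j) ρ(L (i+j))` for all `i, j ≥ −1`, so `ρ` is a
representation of `Witt_>`. -/
theorem witt_gt_representation_S0
    (lam : ℂ) (h b : LaurentSeries ℂ) (hder : Dz h ≠ 0)
    (L : Module.End ℂ (LaurentSeries ℂ))
    (hL : L = mz (-(h / Dz h)) * Dz + mz b)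
    (ρ : ℤ → Module.End ℂ (LaurentSeries ℂ))
    (hρ : ∀ i : ℤ, 0 ≤ i →
      ρ i = mz (h ^ i) * (L + ((i : ℂ) * lam) • 1) * pochEnd (L - (lam + (i : ℂ)) • 1) i.toNat)
    (hρm1 : ρ (-1) = mz h⁻¹) :
    ∀ i j : ℤ, -1 ≤ i → -1 ≤ j →
      ⁅ρ i, ρ j⁆ = (((i : ℂ) - (j : ℂ))) • ρ (i + j) :=
  witt_main lam h b hder L hL ρ hρ hρm1
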